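/- Let P ⊆ [0,1] be a nonempty compact set with no isolated points which is totally disconnected. Then P is homeomorphic to Cantor space 2^ω. -/

import Mathlib

open Set Metric Filter

namespace Stmt17

/-- Bundled hypotheses about the ambient set `P`. -/
def Hyp (P : Set ℝ) : Prop :=
  P.Nonempty ∧ P ⊆ Set.Icc 0 1 ∧ IsCompact P ∧ Preperfect P ∧ IsTotallyDisconnected P

/-- A cell: a nonempty compact relatively clopen subset of `P`. -/
def Cell (P C : Set ℝ) : Prop :=
  C.Nonempty ∧ IsCompact C ∧ ∃ U, IsOpen U ∧ C = P ∩ U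

theorem Cell.subsetP {P C : Set ℝ} (h : Cell P C) : C ⊆ P := by
  obtain ⟨-, -, U, -, rfl⟩ := h; exact inter_subset_left

theorem cell_self {P : Set ℝ} (h : Hyp P) : Cell P P :=
  ⟨h.1, h.2.2.1, univ, isOpen_univ, (inter_univ P).symm⟩

/-- In any nondegenerate interval there is a point outside `P`. -/
theorem gap {P : Set ℝ} (h : Hyp P) {u v : ℝ} (huv : u < v) :
    ∃ c, c ∈ Ioo u v ∧ c ∉ P := by
  by_contra hc
  push_neg at hc
  have h1 : Ioo u v ⊆ P := fun c hcuv => hc c hcuv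
  have hsub := h.2.2.2.2 (Ioo u v) h1 isPreconnected_Ioo
  have m1 : (2*u+v)/3 ∈ Ioo u v := ⟨by linarith, by linarith⟩
  have m2 : (u+2*v)/3 ∈ Ioo u v := ⟨by linarith, by linarith⟩
  have := hsub m1 m2
  linarith

/-- Every cell has two points. -/
theorem cell_two {P C : Set ℝ} (h : Hyp P) (hC : Cell P C) :
    ∃ x ∈ C, ∃ y ∈ C, x < y := by
  obtain ⟨⟨x, hx⟩, hcomp, U, hU, hCU⟩ := hC
  have hx' := hx
  rw [hCU] at hx'
  have acc : AccPt x (𝓟 P) := h.2.2.2.1 x hx'.1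
  rw [accPt_iff_nhds] at acc
  obtain ⟨y, ⟨hyU, hyP⟩, hyx⟩ := acc U (hU.mem_nhds hx'.2)
  have hyC : y ∈ C := by rw [hCU]; exact ⟨hyP, hyU⟩
  rcases lt_or_gt_of_ne hyx with h' | h'
  · exact ⟨y, hyC, x, hx, h'⟩
  · exact ⟨x, hx, y, hyC, h'⟩

/-- Cutting a cell by an interval with endpoints outside `P` yields a cell. -/
theorem cell_Ioo {P C : Set ℝ} (hC : Cell P C) {c₁ c₂ : ℝ} (h₁ : c₁ ∉ P) (h₂ : c₂ ∉ P)
    (hne : (C ∩ Ioo c₁ c₂).Nonempty) : Cell P (C ∩ Ioo c₁ c₂) := by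
  obtain ⟨hCne, hcomp, U, hU, hCU⟩ := hC
  refine ⟨hne, ?_, U ∩ Ioo c₁ c₂, hU.inter isOpen_Ioo, by rw [hCU, inter_assoc]⟩
  have key : C ∩ Ioo c₁ c₂ = C ∩ Icc c₁ c₂ := by
    ext x
    constructor
    · rintro ⟨hx, h3, h4⟩; exact ⟨hx, h3.le, h4.le⟩
    · rintro ⟨hx, h3, h4⟩
      have hxP : x ∈ P := by rw [hCU] at hx; exact hx.1
      refine ⟨hx, lt_of_le_of_ne h3 ?_, lt_of_le_of_ne h4 ?_⟩
      · rintro rfl; exact h₁ hxP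
      · rintro rfl; exact h₂ hxP
  rw [key]
  exact hcomp.inter_right isClosed_Icc

theorem notP_neg_one {P : Set ℝ} (h : Hyp P) : (-1 : ℝ) ∉ P := fun hc => by
  have := h.2.1 hc; rw [Set.mem_Icc] at this; linarith [this.1]

theorem notP_two {P : Set ℝ} (h : Hyp P) : (2 : ℝ) ∉ P := fun hc => by
  have := h.2.1 hc; rw [Set.mem_Icc] at this; linarith [this.2]

theorem cell_sub_Ioo {P C : Set ℝ} (h : Hyp P) (hC : Cell P C) :
    C ⊆ Ioo (-1 : ℝ) 2 := fun x hx => by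
  have := h.2.1 (hC.subsetP hx)
  rw [Set.mem_Icc] at this
  exact ⟨by linarith [this.1], by linarith [this.2]⟩

/-- Every cell splits into two disjoint cells. -/
theorem split2 {P C : Set ℝ} (h : Hyp P) (hC : Cell P C) :
    ∃ A B, Cell P A ∧ Cell P B ∧ Disjoint A B ∧ A ∪ B = C := by
  obtain ⟨x, hx, y, hy, hxy⟩ := cell_two h hC
  obtain ⟨c, hc, hcP⟩ := gap h hxy
  have hsub := cell_sub_Ioo h hC
  refine ⟨C ∩ Ioo (-1) c, C ∩ Ioo c 2, ?_, ?_, ?_, ?_⟩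
  · exact cell_Ioo hC (notP_neg_one h) hcP ⟨x, hx, (hsub hx).1, hc.1⟩
  · exact cell_Ioo hC hcP (notP_two h) ⟨y, hy, hc.2, (hsub hy).2⟩
  · refine Set.disjoint_left.2 ?_
    rintro z ⟨-, -, hz2⟩ ⟨-, hz3, -⟩
    exact absurd hz3 (not_lt.2 hz2.le)
  · apply Set.Subset.antisymm
    · rintro z (⟨hz, -⟩ | ⟨hz, -⟩) <;> exact hz
    · intro z hz
      have hz' := hsub hz
      have hzc : z ≠ c := fun hzc => hcP (hzc ▸ hC.subsetP hz)
      rcases lt_or_gt_of_ne hzc with h' | h'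
      · exact Or.inl ⟨hz, hz'.1, h'⟩
      · exact Or.inr ⟨hz, h', hz'.2⟩

/-- Union of a list of sets. -/
def nodeSet (L : List (Set ℝ)) : Set ℝ := L.foldr (· ∪ ·) ∅

@[simp] theorem nodeSet_nil : nodeSet [] = ∅ := rfl
@[simp] theorem nodeSet_cons (A : Set ℝ) (L : List (Set ℝ)) :
    nodeSet (A :: L) = A ∪ nodeSet L := rfl

theorem mem_nodeSet {x : ℝ} {L : List (Set ℝ)} :
    x ∈ nodeSet L ↔ ∃ A ∈ L, x ∈ A := by
  induction L with
  | nil => simp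
  | cons A L ih => simp [ih]

theorem subset_nodeSet {A : Set ℝ} {L : List (Set ℝ)} (hA : A ∈ L) : A ⊆ nodeSet L :=
  fun x hx => mem_nodeSet.2 ⟨A, hA, hx⟩

theorem nodeSet_subsetP {P : Set ℝ} {L : List (Set ℝ)} (h : ∀ A ∈ L, Cell P A) :
    nodeSet L ⊆ P := by
  intro x hx
  obtain ⟨A, hA, hxA⟩ := mem_nodeSet.1 hx
  exact (h A hA).subsetP hxA

theorem nodeSet_isCompact {P : Set ℝ} {L : List (Set ℝ)} (h : ∀ A ∈ L, Cell P A) :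
    IsCompact (nodeSet L) := by
  induction L with
  | nil => simpa using isCompact_empty
  | cons A L ih =>
    simpa using ((h A (by simp)).2.1.union (ih fun B hB => h B (by simp [hB])))

theorem disjoint_nodeSet {B : Set ℝ} {L : List (Set ℝ)}
    (h : ∀ A ∈ L, Disjoint B A) : Disjoint B (nodeSet L) := by
  induction L with
  | nil => simp
  | cons A L ih =>
    rw [nodeSet_cons, Set.disjoint_union_right]
    exact ⟨h A (by simp), ih fun A' hA' => h A' (by simp [hA'])⟩

/-- A good partition of a cell `C` at scale `ε`. -/
def GoodPart (P C : Set ℝ) (ε : ℝ) (L : List (Set ℝ)) : Prop :=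
  2 ≤ L.length ∧ (∀ A ∈ L, Cell P A ∧ diam A ≤ ε) ∧ L.Pairwise Disjoint ∧ nodeSet L = C

/-- Main partition lemma: every cell can be partitioned into at least two
disjoint cells of diameter at most `ε`. -/
theorem exists_goodPart {P C : Set ℝ} (h : Hyp P) (hC : Cell P C) {ε : ℝ} (hε : 0 < ε) :
    ∃ L : List (Set ℝ), GoodPart P C ε L := by
  classical
  obtain ⟨hCne, hcomp, U, hU, hCU⟩ := id hC
  set a := sInf C with ha_def
  set b := sSup C with hb_def
  have ha : a ∈ C := hcomp.sInf_mem hCne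
  have hb : b ∈ C := hcomp.sSup_mem hCne
  have hCab : ∀ x ∈ C, a ≤ x ∧ x ≤ b := fun x hx =>
    ⟨csInf_le hcomp.bddBelow hx, le_csSup hcomp.bddAbove hx⟩
  have hab : a ≤ b := (hCab a ha).2
  set δ := ε / 3 with hδ_def
  have hδ0 : 0 < δ := by positivity
  set N := Nat.ceil ((b - a) / δ) with hN_def
  have cutex : ∀ k : ℕ, ∃ c, c ∈ Ioo (a + k * δ) (a + k * δ + δ) ∧ c ∉ P :=
    fun k => gap h (by linarith)
  choose cut hcut1 hcut2 using cutex
  set d : ℕ → ℝ := fun k => Nat.casesOn k (a - 2) cut with hd_def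
  have hd0 : d 0 = a - 2 := rfl
  have hds : ∀ k, d (k + 1) = cut k := fun _ => rfl
  have hcutlb : ∀ k : ℕ, a + k * δ < cut k := fun k => (hcut1 k).1
  have hcutub : ∀ k : ℕ, cut k < a + k * δ + δ := fun k => (hcut1 k).2
  have hdmono : StrictMono d := by
    apply strictMono_nat_of_lt_succ
    intro k
    cases k with
    | zero =>
      rw [hd0, hds]
      have := hcutlb 0
      push_cast at this
      linarith
    | succ k =>
      rw [hds, hds]
      have h1 := hcutub k
      have h2 := hcutlb (k + 1)
      push_cast at h1 h2
      linarith
  have hdP : ∀ k, d k ∉ P := by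
    intro k
    cases k with
    | zero =>
      rw [hd0]
      intro hc
      have h1 := h.2.1 hc
      have h2 := h.2.1 (hC.subsetP ha)
      rw [Set.mem_Icc] at h1 h2
      linarith [h1.1, h2.2]
    | succ k => rw [hds]; exact hcut2 k
  set piece : ℕ → Set ℝ := fun k => C ∩ Ioo (d k) (d (k + 1)) with hpiece_def
  -- cover
  have hcover : ∀ x ∈ C, ∃ k ≤ N, x ∈ piece k := by
    intro x hx
    have hax : a ≤ x := (hCab x hx).1
    have hxb : x ≤ b := (hCab x hx).2
    have hQ0 : d 0 < x := by rw [hd0]; linarith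
    have hQtop : x < d (N + 1) := by
      rw [hds]
      have h1 : (b - a) / δ ≤ (N : ℝ) := Nat.le_ceil _
      have h2 : b - a ≤ N * δ := by
        rw [div_le_iff₀ hδ0] at h1; linarith
      have := hcutlb N
      linarith
    set K := Nat.findGreatest (fun k => d k < x) N with hK_def
    have hK1 : d K < x := Nat.findGreatest_spec (P := fun k => d k < x) (Nat.zero_le N) hQ0
    have hKN : K ≤ N := Nat.findGreatest_le N
    have hK2 : x < d (K + 1) := by
      rcases eq_or_lt_of_le hKN with heq | hlt
      · rw [heq]; exact hQtop
      · have hng : ¬ d (K + 1) < x :=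
          Nat.findGreatest_is_greatest (Nat.lt_succ_self K) (Nat.succ_le_of_lt hlt)
        have hne' : x ≠ d (K + 1) := by
          intro hc
          exact hdP (K + 1) (hc ▸ hC.subsetP hx)
        exact lt_of_le_of_ne (not_lt.1 hng) hne'
    exact ⟨K, hKN, hx, hK1, hK2⟩
  -- diameter bound
  have hdiam : ∀ k, diam (piece k) ≤ ε := by
    intro k
    cases k with
    | zero =>
      have hsub' : piece 0 ⊆ Icc a (cut 0) := by
        rintro x ⟨hx, -, h2⟩
        exact ⟨(hCab x hx).1, ((hds 0) ▸ h2).le⟩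
      have h1 : a ≤ cut 0 := by
        have := hcutlb 0; push_cast at this; linarith
      calc diam (piece 0) ≤ diam (Icc a (cut 0)) := diam_mono hsub' (isBounded_Icc _ _)
        _ = cut 0 - a := Real.diam_Icc h1
        _ ≤ ε := by have := hcutub 0; push_cast at this; linarith
    | succ k =>
      have hsub' : piece (k + 1) ⊆ Icc (cut k) (cut (k + 1)) := by
        rintro x ⟨hx, h1, h2⟩
        rw [hds] at h1
        rw [hds] at h2
        exact ⟨h1.le, h2.le⟩
      have hle : cut k ≤ cut (k + 1) := by
        have := hdmono (Nat.lt_succ_self (k + 1))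
        rw [hds, hds] at this
        exact this.le
      calc diam (piece (k + 1)) ≤ diam (Icc (cut k) (cut (k + 1))) :=
            diam_mono hsub' (isBounded_Icc _ _)
        _ = cut (k + 1) - cut k := Real.diam_Icc hle
        _ ≤ ε := by
            have h1 := hcutub (k + 1)
            have h2 := hcutlb k
            push_cast at h1 h2
            linarith
  -- pairwise disjointness
  have hdisj : ∀ j k, j < k → Disjoint (piece j) (piece k) := by
    intro j k hjk
    refine Set.disjoint_left.2 ?_
    rintro x ⟨-, -, h2⟩ ⟨-, h3, -⟩
    have : d (j + 1) ≤ d k := hdmono.monotone (Nat.succ_le_of_lt hjk)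
    linarith
  -- build the list
  have main : ∃ L : List (Set ℝ), 1 ≤ L.length ∧ (∀ A ∈ L, Cell P A ∧ diam A ≤ ε) ∧
      L.Pairwise Disjoint ∧ nodeSet L = C := by
    refine ⟨((List.range (N + 1)).map piece).filter (fun A => decide A.Nonempty),
      ?_, ?_, ?_, ?_⟩
    · obtain ⟨x, hx⟩ := hCne
      obtain ⟨k, hk, hxk⟩ := hcover x hx
      have hmem : piece k ∈ ((List.range (N + 1)).map piece).filter
          (fun A => decide A.Nonempty) := by
        rw [List.mem_filter]
        exact ⟨List.mem_map.2 ⟨k, List.mem_range.2 (by omega), rfl⟩,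
          by simp; exact ⟨x, hxk⟩⟩
      have : ((List.range (N + 1)).map piece).filter (fun A => decide A.Nonempty) ≠ [] :=
        List.ne_nil_of_mem hmem
      exact List.length_pos_iff.2 this
    · intro A hA
      rw [List.mem_filter] at hA
      obtain ⟨hA0, hAne⟩ := hA
      obtain ⟨k, -, rfl⟩ := List.mem_map.1 hA0
      have hne' : (piece k).Nonempty := by simpa using hAne
      exact ⟨cell_Ioo hC (hdP k) (hdP (k + 1)) hne', hdiam k⟩
    · apply List.Pairwise.sublist List.filter_sublist
      rw [List.pairwise_map]
      exact List.pairwise_lt_range.imp (fun hjk => hdisj _ _ hjk)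
    · apply Subset.antisymm
      · intro x hx
        obtain ⟨A, hA, hxA⟩ := mem_nodeSet.1 hx
        rw [List.mem_filter] at hA
        obtain ⟨k, -, rfl⟩ := List.mem_map.1 hA.1
        exact hxA.1
      · intro x hx
        obtain ⟨k, hk, hxk⟩ := hcover x hx
        refine subset_nodeSet ?_ hxk
        rw [List.mem_filter]
        exact ⟨List.mem_map.2 ⟨k, List.mem_range.2 (by omega), rfl⟩,
          by simp; exact ⟨x, hxk⟩⟩
  obtain ⟨L, hL1, hLcell, hLpair, hLnode⟩ := main
  rcases le_or_gt 2 L.length with h2 | h2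
  · exact ⟨L, h2, hLcell, hLpair, hLnode⟩
  · -- L has length exactly 1
    rcases L with _ | ⟨A, L'⟩
    · simp at hL1
    · rcases L' with _ | ⟨B, L''⟩
      · have hAC : A = C := by
          have : nodeSet [A] = A := by simp
          rw [← hLnode, this]
        have hdiamC : diam C ≤ ε := by
          rw [← hAC]; exact (hLcell A (by simp)).2
        obtain ⟨A', B', hA', hB', hd', hu'⟩ := split2 h hC
        have hA'sub : A' ⊆ C := by rw [← hu']; exact subset_union_left
        have hB'sub : B' ⊆ C := by rw [← hu']; exact subset_union_right
        refine ⟨[A', B'], by simp, ?_, ?_, ?_⟩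
        · intro X hX
          have hdX : ∀ X' ⊆ C, Cell P X' → Cell P X' ∧ diam X' ≤ ε := fun X' hs hc' =>
            ⟨hc', le_trans (diam_mono hs hcomp.isBounded) hdiamC⟩
          rw [List.mem_cons, List.mem_singleton] at hX
          rcases hX with h1 | h1 <;> rw [h1]
          · exact hdX A' hA'sub hA'
          · exact hdX B' hB'sub hB'
        · simp [hd']
        · simp [hu']
      · simp at h2

open scoped Classical in
/-- The canonical good partition of a cell at scale `(1/2)^n`. -/
noncomputable def blockList (P C : Set ℝ) (n : ℕ) : List (Set ℝ) :=
  if h : Hyp P ∧ Cell P C then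
    (exists_goodPart h.1 h.2 (pow_pos (by norm_num : (0:ℝ) < 2⁻¹) n)).choose
  else [∅, ∅]

theorem blockList_spec {P C : Set ℝ} (h : Hyp P) (hC : Cell P C) (n : ℕ) :
    GoodPart P C ((2⁻¹ : ℝ) ^ n) (blockList P C n) := by
  have h' : Hyp P ∧ Cell P C := ⟨h, hC⟩
  rw [blockList, dif_pos h']
  exact (exists_goodPart h'.1 h'.2 (pow_pos (by norm_num : (0:ℝ) < 2⁻¹) n)).choose_spec

/-- Invariant for states of the splitting machine. -/
def Inv (P : Set ℝ) (s : ℕ × List (Set ℝ)) : Prop :=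
  2 ≤ s.2.length ∧ (∀ A ∈ s.2, Cell P A ∧ diam A ≤ (2⁻¹ : ℝ) ^ s.1) ∧
    s.2.Pairwise Disjoint

/-- The set associated to a state. -/
def node (s : ℕ × List (Set ℝ)) : Set ℝ := nodeSet s.2

theorem inv_blockList {P C : Set ℝ} (h : Hyp P) (hC : Cell P C) (n : ℕ) :
    Inv P (n, blockList P C n) := by
  obtain ⟨h1, h2, h3, h4⟩ := blockList_spec h hC n
  exact ⟨h1, h2, h3⟩

theorem node_blockList {P C : Set ℝ} (h : Hyp P) (hC : Cell P C) (n : ℕ) :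
    node (n, blockList P C n) = C := (blockList_spec h hC n).2.2.2

/-- One step of the splitting machine. -/
noncomputable def step (P : Set ℝ) (b : Bool) (s : ℕ × List (Set ℝ)) :
    ℕ × List (Set ℝ) :=
  match s.2, b with
  | C₁ :: _ :: _, false => (s.1 + 1, blockList P C₁ (s.1 + 1))
  | [_, C₂], true => (s.1 + 1, blockList P C₂ (s.1 + 1))
  | _ :: C₂ :: C₃ :: rest, true => (s.1, C₂ :: C₃ :: rest)
  | _, _ => s

theorem step_false (P : Set ℝ) (n : ℕ) (C₁ C₂ : Set ℝ) (rest : List (Set ℝ)) :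
    step P false (n, C₁ :: C₂ :: rest) = (n + 1, blockList P C₁ (n + 1)) := by
  rcases rest with _ | ⟨C₃, rest⟩ <;> rfl

theorem step_true_nil (P : Set ℝ) (n : ℕ) (C₁ C₂ : Set ℝ) :
    step P true (n, [C₁, C₂]) = (n + 1, blockList P C₂ (n + 1)) := rfl

theorem step_true_cons (P : Set ℝ) (n : ℕ) (C₁ C₂ C₃ : Set ℝ) (rest : List (Set ℝ)) :
    step P true (n, C₁ :: C₂ :: C₃ :: rest) = (n, C₂ :: C₃ :: rest) := rfl

theorem inv_shape {P : Set ℝ} {s : ℕ × List (Set ℝ)} (hInv : Inv P s) :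
    ∃ n C₁ C₂ rest, s = (n, C₁ :: C₂ :: rest) := by
  obtain ⟨n, L⟩ := s
  rcases L with _ | ⟨C₁, L'⟩
  · exact absurd hInv.1 (by simp)
  · rcases L' with _ | ⟨C₂, rest⟩
    · exact absurd hInv.1 (by simp)
    · exact ⟨n, C₁, C₂, rest, rfl⟩

theorem inv_node_cell {P : Set ℝ} (h : Hyp P) {s : ℕ × List (Set ℝ)} (hInv : Inv P s) :
    Cell P (node s) := by
  obtain ⟨n, C₁, C₂, rest, rfl⟩ := inv_shape hInv
  have hcells : ∀ A ∈ C₁ :: C₂ :: rest, Cell P A := fun A hA => (hInv.2.1 A hA).1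
  refine ⟨?_, nodeSet_isCompact hcells, ?_⟩
  · obtain ⟨x, hx⟩ := (hcells C₁ (by simp)).1
    exact ⟨x, subset_nodeSet (by simp) hx⟩
  · -- clopen: finite union of clopens
    clear hInv
    induction rest generalizing C₁ C₂ with
    | nil =>
      obtain ⟨-, -, U₁, hU₁, hCU₁⟩ := hcells C₁ (by simp)
      obtain ⟨-, -, U₂, hU₂, hCU₂⟩ := hcells C₂ (by simp)
      refine ⟨U₁ ∪ U₂, hU₁.union hU₂, ?_⟩
      show nodeSet [C₁, C₂] = P ∩ (U₁ ∪ U₂)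
      simp [nodeSet, hCU₁, hCU₂, Set.inter_union_distrib_left]
    | cons C₃ rest ih =>
      obtain ⟨U₁, hU₁, hCU₁⟩ := ih C₂ C₃ (fun A hA => hcells A (by
        simp at hA ⊢; tauto))
      obtain ⟨-, -, U₀, hU₀, hCU₀⟩ := hcells C₁ (by simp)
      refine ⟨U₀ ∪ U₁, hU₀.union hU₁, ?_⟩
      show nodeSet (C₁ :: C₂ :: C₃ :: rest) = P ∩ (U₀ ∪ U₁)
      have : nodeSet (C₂ :: C₃ :: rest) = P ∩ U₁ := hCU₁
      rw [nodeSet_cons, this, hCU₀, Set.inter_union_distrib_left]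

theorem step_all {P : Set ℝ} (h : Hyp P) {s : ℕ × List (Set ℝ)} (hInv : Inv P s)
    (b : Bool) :
    Inv P (step P b s) ∧ node (step P b s) ⊆ node s ∧
    s.1 ≤ (step P b s).1 ∧ (step P b s).1 ≤ s.1 + 1 ∧
    ((step P b s).1 = s.1 → (step P b s).2.length < s.2.length) ∧
    (s.1 < (step P b s).1 → diam (node (step P b s)) ≤ (2⁻¹ : ℝ) ^ s.1) := by
  obtain ⟨n, C₁, C₂, rest, rfl⟩ := inv_shape hInv
  obtain ⟨hlen, hcells, hpair⟩ := hInv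
  have hC₁ : Cell P C₁ := (hcells C₁ (by simp)).1
  have hC₂ : Cell P C₂ := (hcells C₂ (by simp)).1
  rcases b with _ | _
  · -- b = false
    rw [step_false]
    have hnode : node (n + 1, blockList P C₁ (n + 1)) = C₁ := node_blockList h hC₁ _
    refine ⟨inv_blockList h hC₁ _, ?_, by simp, by simp, by simp, ?_⟩
    · rw [hnode]; exact subset_nodeSet (by simp)
    · intro _; rw [hnode]; exact (hcells C₁ (by simp)).2
  · -- b = true
    rcases rest with _ | ⟨C₃, rest⟩
    · rw [step_true_nil]
      have hnode : node (n + 1, blockList P C₂ (n + 1)) = C₂ := node_blockList h hC₂ _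
      refine ⟨inv_blockList h hC₂ _, ?_, by simp, by simp, by simp, ?_⟩
      · rw [hnode]; exact subset_nodeSet (by simp)
      · intro _; rw [hnode]; exact (hcells C₂ (by simp)).2
    · rw [step_true_cons]
      refine ⟨⟨by simp, ?_, ?_⟩, ?_, le_refl _, by simp, by simp, by simp⟩
      · intro A hA; exact hcells A (by simp at hA ⊢; tauto)
      · exact hpair.sublist (by simp)
      · show nodeSet (C₂ :: C₃ :: rest) ⊆ nodeSet (C₁ :: C₂ :: C₃ :: rest)
        intro x hx
        rw [nodeSet_cons]
        exact Set.mem_union_right _ hx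

theorem step_split {P : Set ℝ} (h : Hyp P) {s : ℕ × List (Set ℝ)} (hInv : Inv P s) :
    node (step P false s) ∪ node (step P true s) = node s ∧
    Disjoint (node (step P false s)) (node (step P true s)) := by
  obtain ⟨n, C₁, C₂, rest, rfl⟩ := inv_shape hInv
  obtain ⟨hlen, hcells, hpair⟩ := hInv
  have hC₁ : Cell P C₁ := (hcells C₁ (by simp)).1
  have hC₂ : Cell P C₂ := (hcells C₂ (by simp)).1
  have hd : ∀ A ∈ C₂ :: rest, Disjoint C₁ A := by
    have := List.pairwise_cons.1 hpair
    exact this.1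
  rw [step_false]
  have hnodeF : node (n + 1, blockList P C₁ (n + 1)) = C₁ := node_blockList h hC₁ _
  rcases rest with _ | ⟨C₃, rest⟩
  · rw [step_true_nil]
    have hnodeT : node (n + 1, blockList P C₂ (n + 1)) = C₂ := node_blockList h hC₂ _
    rw [hnodeF, hnodeT]
    constructor
    · show C₁ ∪ C₂ = nodeSet [C₁, C₂]
      simp
    · exact hd C₂ (by simp)
  · rw [step_true_cons]
    rw [hnodeF]
    constructor
    · show C₁ ∪ nodeSet (C₂ :: C₃ :: rest) = nodeSet (C₁ :: C₂ :: C₃ :: rest)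
      simp
    · exact disjoint_nodeSet (fun A hA => hd A (by simpa using hA))

/-- The chain of states along a branch `σ`. -/
noncomputable def chain (P : Set ℝ) (σ : ℕ → Bool) : ℕ → ℕ × List (Set ℝ)
  | 0 => (0, blockList P P 0)
  | n + 1 => step P (σ n) (chain P σ n)

theorem chain_inv {P : Set ℝ} (h : Hyp P) (σ : ℕ → Bool) (n : ℕ) :
    Inv P (chain P σ n) := by
  induction n with
  | zero => exact inv_blockList h (cell_self h) 0
  | succ n ih => exact (step_all h ih (σ n)).1

theorem chain_zero_node {P : Set ℝ} (h : Hyp P) (σ : ℕ → Bool) :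
    node (chain P σ 0) = P := node_blockList h (cell_self h) 0

theorem chain_antitone {P : Set ℝ} (h : Hyp P) (σ : ℕ → Bool) {m n : ℕ} (hmn : m ≤ n) :
    node (chain P σ n) ⊆ node (chain P σ m) := by
  induction n with
  | zero => rw [Nat.le_zero.1 hmn]
  | succ n ih =>
    rcases Nat.lt_or_ge m (n + 1) with h' | h'
    · exact le_trans (step_all h (chain_inv h σ n) (σ n)).2.1 (ih (by omega))
    · have : m = n + 1 := by omega
      rw [this]

theorem chain_scale_mono {P : Set ℝ} (h : Hyp P) (σ : ℕ → Bool) {m n : ℕ} (hmn : m ≤ n) :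
    (chain P σ m).1 ≤ (chain P σ n).1 := by
  induction n with
  | zero => rw [Nat.le_zero.1 hmn]
  | succ n ih =>
    rcases Nat.lt_or_ge m (n + 1) with h' | h'
    · exact le_trans (ih (by omega)) (step_all h (chain_inv h σ n) (σ n)).2.2.1
    · have : m = n + 1 := by omega
      rw [this]

theorem chain_escape {P : Set ℝ} (h : Hyp P) (σ : ℕ → Bool) :
    ∀ c i, (chain P σ i).2.length ≤ c →
      ∃ j, i < j ∧ (chain P σ i).1 < (chain P σ j).1 := by
  intro c
  induction c with
  | zero =>
    intro i hi
    exact absurd ((chain_inv h σ i).1.trans hi) (by omega)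
  | succ c ih =>
    intro i hi
    have hall := step_all h (chain_inv h σ i) (σ i)
    rcases Nat.lt_or_ge (chain P σ i).1 (chain P σ (i + 1)).1 with h' | h'
    · exact ⟨i + 1, Nat.lt_succ_self i, h'⟩
    · have heq : (chain P σ (i + 1)).1 = (chain P σ i).1 := le_antisymm h' hall.2.2.1
      have hlen : (chain P σ (i + 1)).2.length < (chain P σ i).2.length :=
        hall.2.2.2.2.1 heq
      obtain ⟨j, hj1, hj2⟩ := ih (i + 1) (by omega)
      exact ⟨j, by omega, by rw [← heq]; exact hj2⟩

theorem chain_scale_unbounded {P : Set ℝ} (h : Hyp P) (σ : ℕ → Bool) (k : ℕ) :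
    ∃ j, k ≤ (chain P σ j).1 := by
  induction k with
  | zero => exact ⟨0, Nat.zero_le _⟩
  | succ k ih =>
    obtain ⟨j, hj⟩ := ih
    obtain ⟨j', hj1, hj2⟩ := chain_escape h σ ((chain P σ j).2.length) j (le_refl _)
    exact ⟨j', by omega⟩

theorem chain_small_diam {P : Set ℝ} (h : Hyp P) (σ : ℕ → Bool) (k : ℕ) :
    ∃ j, ∀ m, j ≤ m → diam (node (chain P σ m)) ≤ (2⁻¹ : ℝ) ^ k := by
  classical
  have hex : ∃ j, k + 1 ≤ (chain P σ j).1 := chain_scale_unbounded h σ (k + 1)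
  obtain ⟨j, hj, hjmin⟩ : ∃ j, k + 1 ≤ (chain P σ j).1 ∧
      ∀ i, i < j → ¬ k + 1 ≤ (chain P σ i).1 :=
    ⟨Nat.find hex, Nat.find_spec hex, fun i hi => Nat.find_min hex hi⟩
  have hj0 : j ≠ 0 := by
    intro hc
    rw [hc] at hj
    have h0 : (chain P σ 0).1 = 0 := rfl
    omega
  obtain ⟨j', rfl⟩ : ∃ j', j = j' + 1 := ⟨j - 1, by omega⟩
  have hj'lt : ¬ k + 1 ≤ (chain P σ j').1 := hjmin j' (Nat.lt_succ_self j')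
  have hall := step_all h (chain_inv h σ j') (σ j')
  have hup : (chain P σ (j' + 1)).1 ≤ (chain P σ j').1 + 1 := hall.2.2.2.1
  have hkeq : (chain P σ j').1 = k := by omega
  have hjump : (chain P σ j').1 < (chain P σ (j' + 1)).1 := by omega
  have hdiam : diam (node (chain P σ (j' + 1))) ≤ (2⁻¹ : ℝ) ^ k := by
    rw [← hkeq]
    exact hall.2.2.2.2.2 hjump
  refine ⟨j' + 1, fun m hm => ?_⟩
  have hsubm : node (chain P σ m) ⊆ node (chain P σ (j' + 1)) := chain_antitone h σ hm
  have hbd : Bornology.IsBounded (node (chain P σ (j' + 1))) :=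
    (inv_node_cell h (chain_inv h σ (j' + 1))).2.1.isBounded
  exact le_trans (diam_mono hsubm hbd) hdiam

theorem chain_congr {P : Set ℝ} (σ τ : ℕ → Bool) (n : ℕ)
    (hagree : ∀ i, i < n → σ i = τ i) : chain P σ n = chain P τ n := by
  induction n with
  | zero => rfl
  | succ n ih =>
    show step P (σ n) (chain P σ n) = step P (τ n) (chain P τ n)
    rw [ih (fun i hi => hagree i (by omega)), hagree n (Nat.lt_succ_self n)]

end Stmt17

theorem stmt17 (P : Set ℝ) (hsub : P ⊆ Set.Icc 0 1) (hne : P.Nonempty)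
    (hcomp : IsCompact P) (hperf : Preperfect P)
    (htd : IsTotallyDisconnected P) :
    Nonempty (P ≃ₜ (ℕ → Bool)) := by
  classical
  have h : Stmt17.Hyp P := ⟨hne, hsub, hcomp, hperf, htd⟩
  have key : ∀ σ : ℕ → Bool, ∃ x : ℝ, ∀ n, x ∈ Stmt17.node (Stmt17.chain P σ n) := by
    intro σ
    have hnon : (⋂ n, Stmt17.node (Stmt17.chain P σ n)).Nonempty := by
      apply IsCompact.nonempty_iInter_of_sequence_nonempty_isCompact_isClosed
      · exact fun n => Stmt17.chain_antitone h σ (Nat.le_succ n)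
      · exact fun n => (Stmt17.inv_node_cell h (Stmt17.chain_inv h σ n)).1
      · exact (Stmt17.inv_node_cell h (Stmt17.chain_inv h σ 0)).2.1
      · exact fun n => (Stmt17.inv_node_cell h (Stmt17.chain_inv h σ n)).2.1.isClosed
    obtain ⟨x, hx⟩ := hnon
    exact ⟨x, fun n => Set.mem_iInter.1 hx n⟩
  choose f hf using key
  have uniq : ∀ (σ : ℕ → Bool) (x y : ℝ), (∀ n, x ∈ Stmt17.node (Stmt17.chain P σ n)) →
      (∀ n, y ∈ Stmt17.node (Stmt17.chain P σ n)) → x = y := by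
    intro σ x y hx hy
    by_contra hne'
    have hd : 0 < dist x y := dist_pos.2 hne'
    obtain ⟨k, hk⟩ := exists_pow_lt_of_lt_one hd (by norm_num : (2⁻¹ : ℝ) < 1)
    obtain ⟨j, hj⟩ := Stmt17.chain_small_diam h σ k
    have hb : Bornology.IsBounded (Stmt17.node (Stmt17.chain P σ j)) :=
      (Stmt17.inv_node_cell h (Stmt17.chain_inv h σ j)).2.1.isBounded
    have h1 := Metric.dist_le_diam_of_mem hb (hx j) (hy j)
    have h2 := hj j (le_refl j)
    linarith
  have hfP : ∀ σ, f σ ∈ P := fun σ => by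
    have := hf σ 0
    rwa [Stmt17.chain_zero_node h σ] at this
  have hinj : Function.Injective f := by
    intro σ τ hfeq
    by_contra hne'
    have hexd : ∃ n, σ n ≠ τ n := by
      by_contra hc
      push_neg at hc
      exact hne' (funext hc)
    obtain ⟨n, hn, hmin⟩ : ∃ n, σ n ≠ τ n ∧ ∀ i, i < n → ¬ σ i ≠ τ i :=
      ⟨Nat.find hexd, Nat.find_spec hexd, fun i hi => Nat.find_min hexd hi⟩
    have hagree : ∀ i, i < n → σ i = τ i := fun i hi => not_not.1 (hmin i hi)
    have hceq : Stmt17.chain P σ n = Stmt17.chain P τ n := Stmt17.chain_congr σ τ n hagree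
    have hsplit := Stmt17.step_split h (Stmt17.chain_inv h σ n)
    have hmemσ : f σ ∈ Stmt17.node (Stmt17.step P (σ n) (Stmt17.chain P σ n)) := hf σ (n+1)
    have hmemτ : f τ ∈ Stmt17.node (Stmt17.step P (τ n) (Stmt17.chain P σ n)) := by
      have h2 := hf τ (n+1)
      show f τ ∈ Stmt17.node (Stmt17.step P (τ n) (Stmt17.chain P σ n))
      rw [hceq]
      exact h2
    have hcases : (σ n = false ∧ τ n = true) ∨ (σ n = true ∧ τ n = false) := by
      rcases Bool.eq_false_or_eq_true (σ n) with h1 | h1 <;>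
        rcases Bool.eq_false_or_eq_true (τ n) with h2 | h2 <;> simp_all
    rcases hcases with ⟨h1, h2⟩ | ⟨h1, h2⟩
    · rw [h1] at hmemσ; rw [h2] at hmemτ
      exact absurd hfeq (hsplit.2.ne_of_mem hmemσ hmemτ)
    · rw [h1] at hmemσ; rw [h2] at hmemτ
      exact absurd hfeq.symm (hsplit.2.ne_of_mem hmemτ hmemσ)
  have hsurj : ∀ x ∈ P, ∃ σ, f σ = x := by
    intro x hx
    let pick : ℕ × List (Set ℝ) → Bool := fun t =>
      if x ∈ Stmt17.node (Stmt17.step P true t) then true else false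
    let T : ℕ → ℕ × List (Set ℝ) := fun n =>
      Nat.rec (0, Stmt17.blockList P P 0) (fun _ t => Stmt17.step P (pick t) t) n
    let σ : ℕ → Bool := fun n => pick (T n)
    have hTeq : ∀ n, Stmt17.chain P σ n = T n := by
      intro n
      induction n with
      | zero => rfl
      | succ n ih =>
        show Stmt17.step P (σ n) (Stmt17.chain P σ n) = Stmt17.step P (pick (T n)) (T n)
        rw [ih]
    have hmem : ∀ n, x ∈ Stmt17.node (Stmt17.chain P σ n) := by
      intro n
      induction n with
      | zero => rw [Stmt17.chain_zero_node h σ]; exact hx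
      | succ n ih =>
        have hsplit := Stmt17.step_split h (Stmt17.chain_inv h σ n)
        have hun : x ∈ Stmt17.node (Stmt17.step P false (Stmt17.chain P σ n)) ∪
            Stmt17.node (Stmt17.step P true (Stmt17.chain P σ n)) := by
          rw [hsplit.1]; exact ih
        show x ∈ Stmt17.node (Stmt17.step P (σ n) (Stmt17.chain P σ n))
        have hσn : σ n = pick (Stmt17.chain P σ n) := by
          show pick (T n) = pick (Stmt17.chain P σ n)
          rw [hTeq n]
        rcases hun with h' | h'
        · have hnt : x ∉ Stmt17.node (Stmt17.step P true (Stmt17.chain P σ n)) :=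
            fun hc => Set.disjoint_left.1 hsplit.2 h' hc
          have hb : σ n = false := by rw [hσn]; simp only [pick, if_neg hnt]
          rw [hb]; exact h'
        · have hb : σ n = true := by rw [hσn]; simp only [pick, if_pos h']
          rw [hb]; exact h'
    exact ⟨σ, uniq σ (f σ) x (hf σ) hmem⟩
  let F : (ℕ → Bool) → P := fun σ => ⟨f σ, hfP σ⟩
  have hFbij : Function.Bijective F := by
    constructor
    · intro σ τ hστ
      exact hinj (congrArg Subtype.val hστ)
    · rintro ⟨x, hx⟩
      obtain ⟨σ, hσ⟩ := hsurj x hx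
      exact ⟨σ, Subtype.ext hσ⟩
  have hFcont : Continuous F := by
    apply Continuous.subtype_mk
    rw [continuous_iff_continuousAt]
    intro σ
    rw [ContinuousAt, Metric.tendsto_nhds]
    intro ε hε
    obtain ⟨k, hk⟩ := exists_pow_lt_of_lt_one hε (by norm_num : (2⁻¹ : ℝ) < 1)
    obtain ⟨j, hj⟩ := Stmt17.chain_small_diam h σ k
    have hopen : IsOpen {τ : ℕ → Bool | ∀ i < j, τ i = σ i} := by
      have heq : {τ : ℕ → Bool | ∀ i < j, τ i = σ i} =
          ⋂ i ∈ Finset.range j, (fun τ : ℕ → Bool => τ i) ⁻¹' {σ i} := by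
        ext τ; simp [Finset.mem_range]
      rw [heq]
      exact isOpen_biInter_finset fun i _ =>
        (continuous_apply i).isOpen_preimage _ (isOpen_discrete _)
    have hmemO : σ ∈ {τ : ℕ → Bool | ∀ i < j, τ i = σ i} := fun i _ => rfl
    refine Filter.eventually_of_mem (hopen.mem_nhds hmemO) ?_
    intro τ hτ
    have hceq : Stmt17.chain P τ j = Stmt17.chain P σ j :=
      Stmt17.chain_congr τ σ j hτ
    have hfτ : f τ ∈ Stmt17.node (Stmt17.chain P σ j) := by
      rw [← hceq]; exact hf τ j
    have hb : Bornology.IsBounded (Stmt17.node (Stmt17.chain P σ j)) :=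
      (Stmt17.inv_node_cell h (Stmt17.chain_inv h σ j)).2.1.isBounded
    have hd := Metric.dist_le_diam_of_mem hb hfτ (hf σ j)
    have h2 := hj j (le_refl j)
    calc dist (f τ) (f σ) ≤ diam (Stmt17.node (Stmt17.chain P σ j)) := hd
      _ ≤ (2⁻¹ : ℝ) ^ k := h2
      _ < ε := hk
  let e : (ℕ → Bool) ≃ P := Equiv.ofBijective F hFbij
  have hecont : Continuous e := hFcont
  exact ⟨(hecont.homeoOfEquivCompactToT2).symm⟩
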